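/- The unit sphere is invariant under the normal component of the boundary system: if n : ℝ → E satisfies HasDerivAt n (-(L t).adjoint (n t) + ⟪n t, (L t).adjoint (n t)⟫ • n t) t for every t ∈ ℝ, and ‖n t₀‖ = 1 for some t₀ ∈ ℝ, then ‖n t‖ = 1 for all t ∈ ℝ. -/

import Mathlib

open MeasureTheory Set Metric
open scoped RealInnerProductSpace

noncomputable section

abbrev Euc (d : ℕ) : Type := EuclideanSpace ℝ (Fin d)

/-- The unit sphere is invariant under the normal component of the boundary system. -/
theorem unit_sphere_invariant_boundary_system
    (d : ℕ) (hd : 1 ≤ d)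
    (L : ℝ → (Euc d →L[ℝ] Euc d)) (hL : Continuous L)
    (n : ℝ → Euc d)
    (hn : ∀ t : ℝ, HasDerivAt n
      (-(ContinuousLinearMap.adjoint (L t) (n t)) +
        ⟪n t, ContinuousLinearMap.adjoint (L t) (n t)⟫ • n t) t)
    (t₀ : ℝ) (hn₀ : ‖n t₀‖ = 1) :
    ∀ t : ℝ, ‖n t‖ = 1 := by
  set a : ℝ → ℝ := fun t => 2 * ⟪n t, ContinuousLinearMap.adjoint (L t) (n t)⟫ with ha_def
  set φ : ℝ → ℝ := fun t => ⟪n t, n t⟫ - 1 with hφ_def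
  have hncont : Continuous n := by
    rw [continuous_iff_continuousAt]
    exact fun t => (hn t).continuousAt
  have ha_cont : Continuous a := by
    apply Continuous.mul continuous_const
    exact Continuous.inner hncont
      ((isBoundedBilinearMap_apply.continuous).comp
        ((((ContinuousLinearMap.adjoint :
          (Euc d →L[ℝ] Euc d) ≃ₗᵢ⋆[ℝ] (Euc d →L[ℝ] Euc d)).continuous).comp hL).prodMk hncont))
  have hφ : ∀ t, HasDerivAt φ (a t * φ t) t := by
    intro t
    have h := ((hn t).inner ℝ (hn t)).sub_const 1
    refine h.congr_deriv ?_
    symm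
    rw [real_inner_comm (n t)]
    simp only [inner_add_right, inner_neg_right, inner_smul_right, real_inner_self_eq_norm_sq]
    ring_nf
    simp only [ha_def, hφ_def, real_inner_self_eq_norm_sq]
    rw [real_inner_comm]
    ring
  set A : ℝ → ℝ := fun t => ∫ s in t₀..t, a s with hA_def
  have hA : ∀ t, HasDerivAt A (a t) t := fun t =>
    intervalIntegral.integral_hasDerivAt_right
      (ha_cont.intervalIntegrable _ _)
      ha_cont.aestronglyMeasurable.stronglyMeasurableAtFilter ha_cont.continuousAt
  set ψ : ℝ → ℝ := fun t => Real.exp (-A t) * φ t with hψ_def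
  have hψ : ∀ t, HasDerivAt ψ 0 t := by
    intro t
    have h1 : HasDerivAt (fun t => Real.exp (-A t)) (Real.exp (-A t) * (-a t)) t :=
      (hA t).neg.exp
    have h := h1.mul (hφ t)
    refine h.congr_deriv ?_
    ring
  have hconst : ∀ t, ψ t = ψ t₀ := by
    intro t
    exact (is_const_of_deriv_eq_zero (fun x => (hψ x).differentiableAt)
        (fun x => (hψ x).deriv) t₀ t).symm
  have hφ0 : ∀ t, φ t = 0 := by
    intro t
    have h0 : ψ t₀ = 0 := by
      simp only [hψ_def, hφ_def, real_inner_self_eq_norm_sq, hn₀]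
      norm_num
    have := hconst t
    rw [h0] at this
    have hexp : Real.exp (-A t) ≠ 0 := Real.exp_ne_zero _
    exact (mul_eq_zero.mp this).resolve_left hexp
  intro t
  have h := hφ0 t
  have hsq : ‖n t‖ ^ 2 = 1 := by
    have := h
    rw [hφ_def] at this
    simp only [real_inner_self_eq_norm_sq] at this
    linarith [sub_eq_zero.mp this]
  nlinarith [norm_nonneg (n t)]
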